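/- The subgroups X := {u₂(x) : x ∈ F} and Y := {u₁(y) : y ∈ F} normalize C: for every x, y ∈ F, u₂(x)·C·u₂(x)⁻¹ = C and u₁(y)·C·u₁(y)⁻¹ = C. -/

import Mathlib

open Matrix

/-- `n(u, x₁, x₂) = [[1,u,x₁,x₂],[0,1,0,−ι(x₁)],[0,0,1,−ι(u)],[0,0,0,1]]`. -/
def nmat {E : Type*} [Field E] (ι : E →+* E) (u x₁ x₂ : E) :
    Matrix (Fin 4) (Fin 4) E :=
  !![1, u, x₁, x₂; 0, 1, 0, -ι x₁; 0, 0, 1, -ι u; 0, 0, 0, 1]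

/-- `C = {n(u, x₁, x₂) ∈ N₁ : u ∈ F}`. -/
def Cset {E : Type*} [Field E] (ι : E →+* E) : Set (Matrix (Fin 4) (Fin 4) E) :=
  {m | ∃ u x₁ x₂ : E, ι u = u ∧ x₂ + ι x₂ + u * ι x₁ + x₁ * ι u = 0 ∧
    m = nmat ι u x₁ x₂}

/-- `u₂(x) = I₄ + s·x·E₂₃`. -/
def u2mat {E : Type*} [Field E] (s x : E) : Matrix (Fin 4) (Fin 4) E :=
  1 + (s * x) • Matrix.single 1 2 1

/-- `u₁(y) = I₄ + s·y·(E₁₂ + E₃₄)`. -/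
def u1mat {E : Type*} [Field E] (s y : E) : Matrix (Fin 4) (Fin 4) E :=
  1 + (s * y) • (Matrix.single 0 1 1 + Matrix.single 2 3 1)


lemma u2mat_eq {E : Type*} [Field E] (s x : E) :
    u2mat s x = !![1,0,0,0; 0,1,s*x,0; 0,0,1,0; 0,0,0,1] := by
  ext i j
  fin_cases i <;> fin_cases j <;>
    simp [u2mat, Matrix.single, Matrix.one_apply, Matrix.vecHead, Matrix.vecTail]

lemma u1mat_eq {E : Type*} [Field E] (s y : E) :
    u1mat s y = !![1,s*y,0,0; 0,1,0,0; 0,0,1,s*y; 0,0,0,1] := by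
  ext i j
  fin_cases i <;> fin_cases j <;>
    simp [u1mat, Matrix.single, Matrix.one_apply, Matrix.add_apply, Matrix.smul_apply, Matrix.of_apply, Matrix.vecHead, Matrix.vecTail, -map_add]

lemma u2_mul {E : Type*} [Field E] (s x x' : E) :
    u2mat s x * u2mat s x' = u2mat s (x + x') := by
  rw [u2mat_eq, u2mat_eq, u2mat_eq]
  ext i j
  fin_cases i <;> fin_cases j <;>
    simp [Matrix.mul_apply, Fin.sum_univ_four, Matrix.vecHead, Matrix.vecTail] <;> ring

lemma u1_mul {E : Type*} [Field E] (s y y' : E) :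
    u1mat s y * u1mat s y' = u1mat s (y + y') := by
  rw [u1mat_eq, u1mat_eq, u1mat_eq]
  ext i j
  fin_cases i <;> fin_cases j <;>
    simp [Matrix.mul_apply, Fin.sum_univ_four, Matrix.vecHead, Matrix.vecTail] <;> ring

lemma u2_inv {E : Type*} [Field E] (s x : E) : (u2mat s x)⁻¹ = u2mat s (-x) := by
  apply Matrix.inv_eq_right_inv
  rw [u2_mul, add_neg_cancel]
  ext i j
  fin_cases i <;> fin_cases j <;>
    simp [u2mat, Matrix.single, Matrix.one_apply, Matrix.vecHead, Matrix.vecTail]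

lemma u1_inv {E : Type*} [Field E] (s y : E) : (u1mat s y)⁻¹ = u1mat s (-y) := by
  apply Matrix.inv_eq_right_inv
  rw [u1_mul, add_neg_cancel]
  ext i j
  fin_cases i <;> fin_cases j <;>
    simp [u1mat, Matrix.single, Matrix.one_apply, Matrix.add_apply,
      Matrix.smul_apply, Matrix.of_apply, Matrix.vecHead, Matrix.vecTail, -map_add]

lemma conj2 {E : Type*} [Field E] (ι : E →+* E) (s x u x₁ x₂ : E)
    (hss : ι s = -s) (hx : ι x = x) :
    u2mat s x * nmat ι u x₁ x₂ * u2mat s (-x) = nmat ι u (x₁ - s * x * u) x₂ := by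
  rw [u2mat_eq, u2mat_eq]
  ext i j
  fin_cases i <;> fin_cases j <;>
    (simp [nmat, Matrix.mul_apply, Fin.sum_univ_four, Matrix.vecHead, Matrix.vecTail,
        _root_.map_sub, _root_.map_mul, hss, hx] <;> ring)

lemma conj1 {E : Type*} [Field E] (ι : E →+* E) (s y u x₁ x₂ : E)
    (hss : ι s = -s) (hy : ι y = y) :
    u1mat s y * nmat ι u x₁ x₂ * u1mat s (-y) =
      nmat ι u x₁ (x₂ - s * y * (x₁ + ι x₁)) := by
  rw [u1mat_eq, u1mat_eq]
  ext i j
  fin_cases i <;> fin_cases j <;>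
    (simp [nmat, Matrix.mul_apply, Fin.sum_univ_four, Matrix.vecHead, Matrix.vecTail,
        _root_.map_sub, _root_.map_add, _root_.map_mul, hss, hy] <;> ring)

lemma u2_zero {E : Type*} [Field E] (s : E) : u2mat s 0 = 1 := by
  simp [u2mat]

lemma u1_zero {E : Type*} [Field E] (s : E) : u1mat s 0 = 1 := by
  simp [u1mat]

lemma conj_mem2 {E : Type*} [Field E] (ι : E →+* E) (s x : E)
    (hss : ι s = -s) (hx : ι x = x) {c : Matrix (Fin 4) (Fin 4) E} (hc : c ∈ Cset ι) :
    u2mat s x * c * (u2mat s x)⁻¹ ∈ Cset ι := by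
  obtain ⟨u, x₁, x₂, hu, hcond, rfl⟩ := hc
  rw [u2_inv, conj2 ι s x u x₁ x₂ hss hx]
  refine ⟨u, x₁ - s * x * u, x₂, hu, ?_, rfl⟩
  have h1 : ι (x₁ - s * x * u) = ι x₁ + s * x * u := by
    rw [_root_.map_sub, _root_.map_mul, _root_.map_mul, hss, hx, hu]; ring
  rw [h1, hu] at *
  linear_combination hcond

lemma conj_mem1 {E : Type*} [Field E] (ι : E →+* E) (hinv : ∀ x, ι (ι x) = x) (s y : E)
    (hss : ι s = -s) (hy : ι y = y) {c : Matrix (Fin 4) (Fin 4) E} (hc : c ∈ Cset ι) :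
    u1mat s y * c * (u1mat s y)⁻¹ ∈ Cset ι := by
  obtain ⟨u, x₁, x₂, hu, hcond, rfl⟩ := hc
  rw [u1_inv, conj1 ι s y u x₁ x₂ hss hy]
  refine ⟨u, x₁, x₂ - s * y * (x₁ + ι x₁), hu, ?_, rfl⟩
  have h1 : ι (x₂ - s * y * (x₁ + ι x₁)) = ι x₂ + s * y * (x₁ + ι x₁) := by
    rw [_root_.map_sub, _root_.map_mul, _root_.map_mul, _root_.map_add, hss, hy, hinv]; ring
  rw [h1]
  linear_combination hcond


/-- The subgroups `X = {u₂(x) : x ∈ F}` and `Y = {u₁(y) : y ∈ F}` normalize `C`: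
`u₂(x)·C·u₂(x)⁻¹ = C` and `u₁(y)·C·u₁(y)⁻¹ = C` for all `x, y ∈ F`. -/
theorem statement14 {E : Type*} [Field E] (htwo : (2 : E) ≠ 0)
    (ι : E →+* E) (hinv : ∀ x, ι (ι x) = x) (hni : ι ≠ RingHom.id E)
    (s : E) (hs0 : s ≠ 0) (hss : ι s = -s) :
    (∀ x : E, ι x = x →
      (fun c => u2mat s x * c * (u2mat s x)⁻¹) '' Cset ι = Cset ι) ∧
    (∀ y : E, ι y = y →
      (fun c => u1mat s y * c * (u1mat s y)⁻¹) '' Cset ι = Cset ι) := by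
  constructor
  · intro x hx
    ext m
    constructor
    · rintro ⟨c, hc, rfl⟩
      exact conj_mem2 ι s x hss hx hc
    · intro hm
      have hx' : ι (-x) = -x := by rw [map_neg, hx]
      refine ⟨u2mat s (-x) * m * (u2mat s (-x))⁻¹, conj_mem2 ι s (-x) hss hx' hm, ?_⟩
      have h1 : u2mat s x * u2mat s (-x) = 1 := by
        rw [u2_mul, add_neg_cancel, u2_zero]
      simp only [u2_inv, neg_neg, ← mul_assoc]
      rw [h1, one_mul, mul_assoc, h1, mul_one]
  · intro y hy
    ext m
    constructor
    · rintro ⟨c, hc, rfl⟩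
      exact conj_mem1 ι hinv s y hss hy hc
    · intro hm
      have hy' : ι (-y) = -y := by rw [map_neg, hy]
      refine ⟨u1mat s (-y) * m * (u1mat s (-y))⁻¹, conj_mem1 ι hinv s (-y) hss hy' hm, ?_⟩
      have h1 : u1mat s y * u1mat s (-y) = 1 := by
        rw [u1_mul, add_neg_cancel, u1_zero]
      simp only [u1_inv, neg_neg, ← mul_assoc]
      rw [h1, one_mul, mul_assoc, h1, mul_one]
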